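/- For every rational point P ∈ C(ℚ) on the Pell conic one has (1/4)·H(P)² ≤ H(2P) ≤ 4·H(P)². -/
import Mathlib


open Filter Real

/-- The defining equation of the Pell conic `X² - ΔY² = 4`. -/
def PellSol (Δ : ℚ) (P : ℚ × ℚ) : Prop := P.1 ^ 2 - Δ * P.2 ^ 2 = 4

/-- The rational points on the Pell conic `X² - ΔY² = 4`. -/
def Conic (Δ : ℚ) : Type := {P : ℚ × ℚ // PellSol Δ P}

namespace Conic

variable {Δ : ℚ}

/-- Addition on the Pell conic. -/
instance : Add (Conic Δ) :=
  ⟨fun P Q => ⟨((P.val.1 * Q.val.1 + Δ * P.val.2 * Q.val.2) / 2,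
    (P.val.1 * Q.val.2 + P.val.2 * Q.val.1) / 2), by
      have hP := P.property
      have hQ := Q.property
      unfold PellSol at *
      dsimp only
      linear_combination ((Q.val.1 ^ 2 - Δ * Q.val.2 ^ 2) / 4) * hP + hQ⟩⟩

/-- The neutral element `(2,0)` of the Pell conic. -/
instance : Zero (Conic Δ) := ⟨⟨(2, 0), by unfold PellSol; norm_num⟩⟩

/-- The negative of a point on the Pell conic. -/
instance : Neg (Conic Δ) :=
  ⟨fun P => ⟨(P.val.1, -P.val.2), by
    have hP := P.property
    unfold PellSol at *
    dsimp only
    linear_combination hP⟩⟩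

@[simp] lemma add_val (P Q : Conic Δ) :
    (P + Q).val = ((P.val.1 * Q.val.1 + Δ * P.val.2 * Q.val.2) / 2,
      (P.val.1 * Q.val.2 + P.val.2 * Q.val.1) / 2) := rfl

@[simp] lemma zero_val : ((0 : Conic Δ)).val = (2, 0) := rfl

@[simp] lemma neg_val (P : Conic Δ) : (-P).val = (P.val.1, -P.val.2) := rfl

protected lemma add_assoc' (P Q R : Conic Δ) : P + Q + R = P + (Q + R) := by
  apply Subtype.ext
  rw [Prod.ext_iff, add_val, add_val, add_val, add_val]
  constructor <;> (dsimp only; ring)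

protected lemma zero_add' (P : Conic Δ) : 0 + P = P := by
  apply Subtype.ext
  rw [Prod.ext_iff, add_val, zero_val]
  constructor <;> (dsimp only; ring)

protected lemma add_zero' (P : Conic Δ) : P + 0 = P := by
  apply Subtype.ext
  rw [Prod.ext_iff, add_val, zero_val]
  constructor <;> (dsimp only; ring)

protected lemma neg_add_cancel' (P : Conic Δ) : -P + P = 0 := by
  have hP := P.property
  unfold PellSol at hP
  apply Subtype.ext
  rw [Prod.ext_iff, add_val, neg_val, zero_val]
  constructor
  · dsimp only
    linear_combination hP / 2
  · dsimp only; ring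

protected lemma add_comm' (P Q : Conic Δ) : P + Q = Q + P := by
  apply Subtype.ext
  rw [Prod.ext_iff, add_val, add_val]
  constructor <;> (dsimp only; ring)

/-- The group structure on the rational points of the Pell conic. -/
instance : AddCommGroup (Conic Δ) where
  add := (· + ·)
  zero := 0
  neg := Neg.neg
  nsmul := nsmulRec
  zsmul := zsmulRec
  add_assoc := Conic.add_assoc'
  zero_add := Conic.zero_add'
  add_zero := Conic.add_zero'
  neg_add_cancel := Conic.neg_add_cancel'
  add_comm := Conic.add_comm'

end Conic
section Extra

namespace Conic

variable {Δ : ℚ}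

/-- The naive height of a point on a Pell conic: `H(x,y) = max(|num x|, den x)`. -/
noncomputable def height (P : Conic Δ) : ℝ :=
  max (|P.val.1.num| : ℝ) (P.val.1.den : ℝ)

/-- The logarithmic height `h₀(P) = log H(P)`. -/
noncomputable def logHeight (P : Conic Δ) : ℝ := Real.log (height P)

/-- The canonical height `h(P) = lim 2⁻ⁿ h₀(2ⁿ P)`. -/
noncomputable def canHeight (P : Conic Δ) : ℝ :=
  limUnder atTop (fun n : ℕ => logHeight ((2 ^ n) • P) / 2 ^ n)

end Conic

/-- The integral points form a subgroup of the group of rational points on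
the Pell conic `X² - ΔY² = 4` (for an integral `Δ`). -/
def intPoints (Δ : ℤ) : AddSubgroup (Conic (Δ : ℚ)) where
  carrier := {P | ∃ a b : ℤ, P.val = ((a : ℚ), (b : ℚ))}
  zero_mem' := ⟨2, 0, by rw [Conic.zero_val]; norm_num⟩
  neg_mem' := by
    rintro P ⟨a, b, h⟩
    exact ⟨a, -b, by rw [Conic.neg_val, h]; push_cast; rfl⟩
  add_mem' := by
    rintro P Q ⟨a, b, hP⟩ ⟨c, e, hQ⟩
    have hPp := P.property
    have hQp := Q.property
    unfold PellSol at hPp hQp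
    rw [hP] at hPp
    rw [hQ] at hQp
    dsimp only at hPp hQp
    have ha : a ^ 2 - Δ * b ^ 2 = 4 := by exact_mod_cast hPp
    have hc : c ^ 2 - Δ * e ^ 2 = 4 := by exact_mod_cast hQp
    have key : ∀ A B C E F : ZMod 2, A ^ 2 - F * B ^ 2 = 4 → C ^ 2 - F * E ^ 2 = 4 →
        (A * C + F * B * E = 0 ∧ A * E + B * C = 0) := by decide
    have ha2 : (a : ZMod 2) ^ 2 - (Δ : ZMod 2) * (b : ZMod 2) ^ 2 = 4 := by
      have := congrArg (fun z : ℤ => (z : ZMod 2)) ha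
      push_cast at this
      exact_mod_cast this
    have hc2 : (c : ZMod 2) ^ 2 - (Δ : ZMod 2) * (e : ZMod 2) ^ 2 = 4 := by
      have := congrArg (fun z : ℤ => (z : ZMod 2)) hc
      push_cast at this
      exact_mod_cast this
    obtain ⟨k1, k2⟩ := key (a : ZMod 2) (b : ZMod 2) (c : ZMod 2) (e : ZMod 2) (Δ : ZMod 2) ha2 hc2
    have d1 : (2 : ℤ) ∣ (a * c + Δ * b * e) := by
      have : ((a * c + Δ * b * e : ℤ) : ZMod 2) = 0 := by push_cast; linear_combination k1
      exact_mod_cast (ZMod.intCast_zmod_eq_zero_iff_dvd _ 2).mp this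
    have d2 : (2 : ℤ) ∣ (a * e + b * c) := by
      have : ((a * e + b * c : ℤ) : ZMod 2) = 0 := by push_cast; linear_combination k2
      exact_mod_cast (ZMod.intCast_zmod_eq_zero_iff_dvd _ 2).mp this
    obtain ⟨X, hX⟩ := d1
    obtain ⟨Y, hY⟩ := d2
    refine ⟨X, Y, ?_⟩
    rw [Conic.add_val, hP, hQ]
    have hX' : ((a : ℚ) * c + Δ * b * e) = 2 * X := by exact_mod_cast congrArg (fun z : ℤ => (z : ℚ)) hX
    have hY' : ((a : ℚ) * e + b * c) = 2 * Y := by exact_mod_cast congrArg (fun z : ℤ => (z : ℚ)) hY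
    rw [Prod.ext_iff]
    constructor
    · dsimp only
      rw [div_eq_iff (by norm_num : (2:ℚ) ≠ 0)]
      linarith [hX']
    · dsimp only
      rw [div_eq_iff (by norm_num : (2:ℚ) ≠ 0)]
      linarith [hY']

end Extra

/-- For every rational point `P` on the Pell conic,
`(1/4)·H(P)² ≤ H(2P) ≤ 4·H(P)²`. -/

lemma sq_sub_two_num_den (x : ℚ) :
    (x ^ 2 - 2).num = x.num ^ 2 - 2 * (x.den : ℤ) ^ 2 ∧
    ((x ^ 2 - 2).den : ℤ) = (x.den : ℤ) ^ 2 := by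
  have hd : (0 : ℤ) < (x.den : ℤ) ^ 2 := by positivity
  have hcop : IsCoprime x.num (x.den : ℤ) := by
    rw [Int.isCoprime_iff_gcd_eq_one]
    exact x.reduced
  have hcop2 : IsCoprime (x.num ^ 2 - 2 * (x.den : ℤ) ^ 2) ((x.den : ℤ) ^ 2) := by
    have h := (hcop.pow (m := 2) (n := 2))
    have he : x.num ^ 2 - 2 * (x.den : ℤ) ^ 2 = x.num ^ 2 + (x.den : ℤ) ^ 2 * (-2) := by ring
    rw [he]
    exact h.add_mul_left_left (-2)
  have hcopn : Nat.Coprime (x.num ^ 2 - 2 * (x.den : ℤ) ^ 2).natAbs ((x.den : ℤ) ^ 2).natAbs :=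
    Int.isCoprime_iff_gcd_eq_one.mp hcop2
  have h0 : ((x.den : ℤ) : ℚ) ≠ 0 := by
    exact_mod_cast (Nat.cast_ne_zero (R := ℚ)).mpr x.den_nz
  have hxe : (x.num : ℚ) = x * ((x.den : ℤ) : ℚ) := by
    push_cast
    rw [mul_comm]
    exact (Rat.den_mul_eq_num x).symm
  have hx : x ^ 2 - 2 = ((x.num ^ 2 - 2 * (x.den : ℤ) ^ 2 : ℤ) : ℚ) / (((x.den : ℤ) ^ 2 : ℤ) : ℚ) := by
    rw [eq_div_iff (by positivity)]
    push_cast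
    push_cast at hxe
    linear_combination (x * (x.den : ℚ) + (x.num : ℚ)) * hxe.symm
  constructor
  · rw [hx]; exact Rat.num_div_eq_of_coprime hd hcopn
  · rw [hx]; exact Rat.den_div_eq_of_coprime hd hcopn

theorem height_double (d : ℤ) (hsf : Squarefree d) (hd0 : d ≠ 0) (hd1 : d ≠ 1)
    (Δ : ℤ) (hΔ : Δ = if d % 4 = 1 then d else 4 * d)
    (P : Conic (Δ : ℚ)) :
    (1 / 4 : ℝ) * (Conic.height P) ^ 2 ≤ Conic.height (2 • P) ∧
    Conic.height (2 • P) ≤ 4 * (Conic.height P) ^ 2 := by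
  set x : ℚ := P.val.1 with hxdef
  have hPp := P.property
  unfold PellSol at hPp
  have h2P : (2 • P).val.1 = x ^ 2 - 2 := by
    rw [two_nsmul]
    rw [Conic.add_val]
    dsimp only
    rw [div_eq_iff (by norm_num : (2:ℚ) ≠ 0)]
    linear_combination -hPp
  obtain ⟨hnum, hden⟩ := sq_sub_two_num_den x
  have hdenR : (((x ^ 2 - 2).den : ℝ)) = (x.den : ℝ) ^ 2 := by exact_mod_cast hden
  unfold Conic.height
  rw [h2P, hnum, hdenR]
  push_cast
  rw [← sq_abs ((x.num : ℝ))]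
  set a : ℝ := |(x.num : ℝ)| with hadef
  set b : ℝ := (x.den : ℝ) with hbdef
  have ha : 0 ≤ a := by rw [hadef]; positivity
  have hb : 1 ≤ b := by rw [hbdef]; exact_mod_cast x.pos
  have hb0 : 0 < b := by linarith
  set M : ℝ := max a b with hM
  have hMa : a ≤ M := le_max_left _ _
  have hMb : b ≤ M := le_max_right _ _
  have hM0 : 0 < M := lt_of_lt_of_le hb0 hMb
  constructor
  · rcases le_or_gt (M ^ 2 / 4) (b ^ 2) with h | h
    · calc (1/4 : ℝ) * M ^ 2 ≤ b ^ 2 := by linarith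
        _ ≤ max (|a ^ 2 - 2 * b ^ 2|) (b ^ 2) := le_max_right _ _
    · have hMa' : M = a := by
        rcases max_cases a b with ⟨h1, _⟩ | ⟨h1, h2⟩
        · exact h1
        · nlinarith
      have hkey : (1/4 : ℝ) * M ^ 2 ≤ a ^ 2 - 2 * b ^ 2 := by
        rw [hMa'] at h ⊢; nlinarith
      calc (1/4 : ℝ) * M ^ 2 ≤ a ^ 2 - 2 * b ^ 2 := hkey
        _ ≤ |a ^ 2 - 2 * b ^ 2| := le_abs_self _
        _ ≤ max (|a ^ 2 - 2 * b ^ 2|) (b ^ 2) := le_max_left _ _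
  · have h1 : |a ^ 2 - 2 * b ^ 2| ≤ 4 * M ^ 2 := by
      rw [abs_le]
      constructor <;> nlinarith
    have h2 : b ^ 2 ≤ 4 * M ^ 2 := by nlinarith
    exact max_le h1 h2
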